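/- Let A be an essential affine hyperplane arrangement in ℝ^n and suppose a polar coordinate system (O; e_1, …, e_n) is generic with respect to A. Then the central arrangement consisting of the directions of the walls of the chamber of A containing O is essential, i.e. the intersection of the directions of these walls is {0}. -/

import Mathlib

open Submodule Set Module
open scoped InnerProductSpace Classical

noncomputable section

abbrev E (n : ℕ) := EuclideanSpace ℝ (Fin n)

/-- An affine hyperplane `{x | ⟪a, x⟫ = c}` with `a ≠ 0`. -/
structure AffHyp (n : ℕ) where
  normal : E n
  const : ℝ
  normal_ne : normal ≠ 0

/-- The affine hyperplane as a set. -/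
def AffHyp.carrier {n : ℕ} (H : AffHyp n) : Set (E n) :=
  {x | ⟪H.normal, x⟫_ℝ = H.const}

/-- The facet of the arrangement `A` containing `x`: the set of points whose sign
vector with respect to all hyperplanes of `A` agrees with that of `x`. -/
def facet {n : ℕ} (A : Finset (AffHyp n)) (x : E n) : Set (E n) :=
  {y | ∀ H ∈ A,
    Real.sign (⟪H.normal, y⟫_ℝ - H.const) = Real.sign (⟪H.normal, x⟫_ℝ - H.const)}

/-- Dimension of a subset of `ℝⁿ`: the dimension of its affine span. -/
def sdim {n : ℕ} (s : Set (E n)) : ℕ :=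
  finrank ℝ (affineSpan ℝ s).direction

/-- The intersection of a subfamily of hyperplanes. -/
def interFam {n : ℕ} (S : Finset (AffHyp n)) : Set (E n) :=
  {x | ∀ H ∈ S, x ∈ H.carrier}

/-- The affine arrangement `A` is essential: the minimal nonempty intersections of
subfamilies are points, i.e. some subfamily has a nonempty zero-dimensional
intersection. -/
def EssentialAffine {n : ℕ} (A : Finset (AffHyp n)) : Prop :=
  ∃ S : Finset (AffHyp n), S ⊆ A ∧ (interFam S).Nonempty ∧ sdim (interFam S) = 0

/-- `B(S)`: the union of the bounded facets of the arrangement. -/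
def boundedFacets {n : ℕ} (A : Finset (AffHyp n)) : Set (E n) :=
  {x | Bornology.IsBounded (facet A x)}

/-- `W_i = span(e_i, …, e_n)` (1-based; `e_j = b (j - 1)`). -/
def Wsub {n : ℕ} (b : OrthonormalBasis (Fin n) ℝ (E n)) (i : ℕ) :
    Submodule ℝ (E n) :=
  Submodule.span ℝ (⇑b '' {j : Fin n | i ≤ (j : ℕ) + 1})

/-- `P_i`: the orthogonal projection of `P - O` onto `W_i`. -/
def projW {n : ℕ} (O : E n) (b : OrthonormalBasis (Fin n) ℝ (E n)) (i : ℕ)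
    (P : E n) : E n :=
  (orthogonalProjection (Wsub b i) (P - O) : E n)

/-- The polar coordinates of `P` for the polar system `(O; b)`:
`theta O b 0 P = ρ(P) = ‖P - O‖`; for `1 ≤ i ≤ n - 2`, `theta O b i P ∈ [0, π]`
is the angle between `P_i` and `e_i` (equal to `0` when `P_i = 0`); and
`theta O b (n-1) P ∈ (-π, π]` is the signed angle from `e_{n-1}` to `P_{n-1}`
in the plane `W_{n-1}` oriented by `(e_{n-1}, e_n)`. -/
def theta {n : ℕ} (O : E n) (b : OrthonormalBasis (Fin n) ℝ (E n)) (i : ℕ)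
    (P : E n) : ℝ :=
  if h0 : i = 0 then ‖P - O‖
  else if h1 : i + 1 < n then
    (if projW O b i P = 0 then 0
     else InnerProductGeometry.angle (projW O b i P) (b ⟨i - 1, by omega⟩))
  else if h2 : i < n then
    Complex.arg ((⟪P - O, b ⟨i - 1, by omega⟩⟫_ℝ : ℂ)
      + (⟪P - O, b ⟨i, h2⟩⟫_ℝ : ℂ) * Complex.I)
  else 0

/-- The open cone `B̃(δ) = {P : ρ(P) > 0, θ_i(P) ∈ (0, δ) for i = 1, …, n-1}`. -/
def Btilde {n : ℕ} (O : E n) (b : OrthonormalBasis (Fin n) ℝ (E n)) (δ : ℝ) :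
    Set (E n) :=
  {P | 0 < ‖P - O‖ ∧ ∀ i : ℕ, 1 ≤ i → i ≤ n - 1 → theta O b i P ∈ Set.Ioo 0 δ}

/-- `V_i(θ̄) = {P : θ_j(P) = θ̄_j for j = i, …, n-1}` (with `θ_0 = ρ`). -/
def Vθ {n : ℕ} (O : E n) (b : OrthonormalBasis (Fin n) ℝ (E n)) (i : ℕ)
    (θbar : ℕ → ℝ) : Set (E n) :=
  {P | ∀ j : ℕ, i ≤ j → j ≤ n - 1 → theta O b j P = θbar j}

/-- The polar system `(O; b)` is generic with respect to `A`:
(i) `O` lies in a chamber of `A`;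
(ii) there is `δ ∈ (0, π/2)` with `B(S) ⊆ B̃(δ)`;
(iii) every `V_i(θ̄)` (all `θ̄_j ∈ [0, δ]`) meeting `clos B̃(δ)` is generic with
respect to every nonempty intersection `L` of a subfamily of `A` of codimension
`k ≤ i`: it meets `L ∩ clos B̃(δ)` and `dim (|V_i(θ̄)| ∩ L) = i - k`. -/
def IsGenericPolar {n : ℕ} (A : Finset (AffHyp n)) (O : E n)
    (b : OrthonormalBasis (Fin n) ℝ (E n)) : Prop :=
  (∀ H ∈ A, ⟪H.normal, O⟫_ℝ ≠ H.const) ∧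
  ∃ δ : ℝ, 0 < δ ∧ δ < Real.pi / 2 ∧
    boundedFacets A ⊆ Btilde O b δ ∧
    ∀ i : ℕ, i ≤ n → ∀ θbar : ℕ → ℝ,
      (∀ j, i ≤ j → j ≤ n - 1 → θbar j ∈ Set.Icc 0 δ) →
      (Vθ O b i θbar ∩ closure (Btilde O b δ)).Nonempty →
      ∀ S : Finset (AffHyp n), S ⊆ A → (interFam S).Nonempty →
        n - sdim (interFam S) ≤ i →
        (Vθ O b i θbar ∩ interFam S ∩ closure (Btilde O b δ)).Nonempty ∧
        sdim ((affineSpan ℝ (Vθ O b i θbar) : Set (E n)) ∩ interFam S)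
          = i - (n - sdim (interFam S))

/-- `H` is a wall of the chamber `C`: `H ∈ A` and `clos C ∩ H` has dimension
`n - 1`. -/
def IsWall {n : ℕ} (A : Finset (AffHyp n)) (C : Set (E n)) (H : AffHyp n) :
    Prop :=
  H ∈ A ∧ sdim (closure C ∩ H.carrier) = n - 1

namespace WallsAux

lemma sign_eq_one_iff {x : ℝ} : Real.sign x = 1 ↔ 0 < x := by
  constructor
  · intro h
    rcases lt_trichotomy x 0 with h1 | h1 | h1
    · rw [Real.sign_of_neg h1] at h; norm_num at h
    · rw [h1, Real.sign_zero] at h; norm_num at h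
    · exact h1
  · exact Real.sign_of_pos

lemma sign_eq_neg_one_iff {x : ℝ} : Real.sign x = -1 ↔ x < 0 := by
  constructor
  · intro h
    rcases lt_trichotomy x 0 with h1 | h1 | h1
    · exact h1
    · rw [h1, Real.sign_zero] at h; norm_num at h
    · rw [Real.sign_of_pos h1] at h; norm_num at h
  · exact Real.sign_of_neg

lemma sign_eq_of_mul_pos {x y : ℝ} (h : 0 < x * y) : Real.sign x = Real.sign y := by
  rcases lt_trichotomy x 0 with h1 | h1 | h1
  · have hy : y < 0 := by nlinarith
    rw [Real.sign_of_neg h1, Real.sign_of_neg hy]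
  · subst h1; simp at h
  · have hy : 0 < y := by nlinarith
    rw [Real.sign_of_pos h1, Real.sign_of_pos hy]

lemma sign_mul (x y : ℝ) : Real.sign (x * y) = Real.sign x * Real.sign y := by
  rcases lt_trichotomy x 0 with h1 | h1 | h1 <;>
    rcases lt_trichotomy y 0 with h2 | h2 | h2 <;>
    first
      | (subst h1; simp)
      | (subst h2; simp)
      | (rw [Real.sign_of_neg h1, Real.sign_of_neg h2,
          Real.sign_of_pos (by nlinarith : (0:ℝ) < x * y)]; ring)
      | (rw [Real.sign_of_neg h1, Real.sign_of_pos h2,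
          Real.sign_of_neg (by nlinarith : x * y < 0)]; ring)
      | (rw [Real.sign_of_pos h1, Real.sign_of_neg h2,
          Real.sign_of_neg (by nlinarith : x * y < 0)]; ring)
      | (rw [Real.sign_of_pos h1, Real.sign_of_pos h2,
          Real.sign_of_pos (by nlinarith : (0:ℝ) < x * y)]; ring)

lemma same_side {x p : ℝ} (h : |x - p| < |p|) : 0 < x * p := by
  rcases lt_trichotomy p 0 with h1 | h1 | h1
  · have : x < 0 := by
      have := abs_lt.mp h
      rw [abs_of_neg h1] at this
      linarith [this.1, this.2]
    exact mul_pos_of_neg_of_neg this h1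
  · subst h1; simp at h; linarith [abs_nonneg x]
  · have : 0 < x := by
      have := abs_lt.mp h
      rw [abs_of_pos h1] at this
      linarith [this.1, this.2]
    exact mul_pos this h1

end WallsAux


namespace WallsAux

open MeasureTheory

lemma exists_generic {n : ℕ} (U : Set (E n)) (hU : IsOpen U) (hne : U.Nonempty)
    (F : Finset (E n × ℝ)) (hF : ∀ p ∈ F, p.1 ≠ 0) :
    ∃ x ∈ U, ∀ p ∈ F, ⟪p.1, x⟫_ℝ ≠ p.2 := by
  classical
  set B : Set (E n) := ⋃ p ∈ F, {x : E n | ⟪p.1, x⟫_ℝ = p.2} with hB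
  have hBnull : volume B = 0 := by
    refine (measure_biUnion_null_iff F.countable_toSet).mpr fun p hp => ?_
    have hp1 : p.1 ≠ 0 := hF p hp
    have hn : ‖p.1‖ ^ 2 ≠ 0 := pow_ne_zero _ (norm_ne_zero_iff.mpr hp1)
    have hset : {x : E n | ⟪p.1, x⟫_ℝ = p.2}
        = (AffineSubspace.mk' ((p.2 / ‖p.1‖ ^ 2) • p.1)
            (LinearMap.ker (innerₛₗ ℝ p.1)) : Set (E n)) := by
      ext x
      simp only [Set.mem_setOf_eq, SetLike.mem_coe, AffineSubspace.mem_mk',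
        LinearMap.mem_ker, innerₛₗ_apply_apply, vsub_eq_sub, inner_sub_right,
        real_inner_smul_right, real_inner_self_eq_norm_sq]
      constructor
      · intro h; rw [h]; field_simp; ring
      · intro h
        have : ⟪p.1, x⟫_ℝ = p.2 / ‖p.1‖ ^ 2 * ‖p.1‖ ^ 2 := by linarith
        rw [this]; field_simp
    rw [hset]
    apply Measure.addHaar_affineSubspace
    intro htop
    have h1 : ((p.2 / ‖p.1‖ ^ 2) • p.1 + p.1) ∈ AffineSubspace.mk' ((p.2 / ‖p.1‖ ^ 2) • p.1)
        (LinearMap.ker (innerₛₗ ℝ p.1)) := by rw [htop]; trivial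
    rw [AffineSubspace.mem_mk'] at h1
    simp only [vsub_eq_sub, add_sub_cancel_left, LinearMap.mem_ker, innerₛₗ_apply_apply] at h1
    rw [real_inner_self_eq_norm_sq] at h1
    exact hn h1
  have hvol : volume (U \ B) ≠ 0 := by
    rw [measure_diff_null hBnull]
    exact (hU.measure_pos volume hne).ne'
  obtain ⟨x, hx⟩ := nonempty_of_measure_ne_zero hvol
  exact ⟨x, hx.1, fun p hp hcon => hx.2 (Set.mem_biUnion hp hcon)⟩

lemma half_helper {a c : ℝ} (hc : c ≠ 0) : a / (2 * c) * c = a / 2 := by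
  field_simp

set_option maxHeartbeats 1000000 in
lemma crossing {n : ℕ} (A : Finset (AffHyp n)) (O Q v : E n)
    (hO : ∀ H ∈ A, ⟪H.normal, O⟫_ℝ ≠ H.const)
    (hQ : Q ∈ facet A O)
    (hdist : ∀ H ∈ A, ∀ H' ∈ A, ⟪H.normal, v⟫_ℝ ≠ 0 → ⟪H'.normal, v⟫_ℝ ≠ 0 →
      (H.const - ⟪H.normal, Q⟫_ℝ) / ⟪H.normal, v⟫_ℝ
        = (H'.const - ⟪H'.normal, Q⟫_ℝ) / ⟪H'.normal, v⟫_ℝ →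
      (⟪H.normal, v⟫_ℝ)⁻¹ • H.normal = (⟪H'.normal, v⟫_ℝ)⁻¹ • H'.normal)
    (H₀ : AffHyp n) (hH₀ : H₀ ∈ A) (ha₀ : ⟪H₀.normal, v⟫_ℝ ≠ 0)
    (ht₀ : 0 < (H₀.const - ⟪H₀.normal, Q⟫_ℝ) / ⟪H₀.normal, v⟫_ℝ) :
    ∃ H₁ ∈ A, ⟪H₁.normal, v⟫_ℝ ≠ 0 ∧ IsWall A (facet A O) H₁ := by
  classical
  set f : AffHyp n → E n → ℝ := fun H x => ⟪H.normal, x⟫_ℝ - H.const with hf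
  set a : AffHyp n → ℝ := fun H => ⟪H.normal, v⟫_ℝ with ha
  set t : AffHyp n → ℝ := fun H => (H.const - ⟪H.normal, Q⟫_ℝ) / a H with ht
  have hsQ : ∀ H ∈ A, Real.sign (f H Q) = Real.sign (f H O) := fun H hH => hQ H hH
  have hfO : ∀ H ∈ A, f H O ≠ 0 := fun H hH => sub_ne_zero.mpr (hO H hH)
  have hfQ : ∀ H ∈ A, f H Q ≠ 0 := by
    intro H hH h
    apply hfO H hH
    have h2 := hsQ H hH
    rw [h, Real.sign_zero] at h2
    exact Real.sign_eq_zero_iff.mp h2.symm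
  have hkey : ∀ (H : AffHyp n) (c : ℝ), f H (Q + c • v) = f H Q + c * a H := by
    intro H c
    simp only [hf, ha, inner_add_right, real_inner_smul_right]
    ring
  have hat : ∀ H, a H ≠ 0 → a H * t H = - f H Q := by
    intro H haH
    rw [ht]
    simp only [hf]
    field_simp
    ring
  set Dpos : Finset (AffHyp n) := A.filter (fun H => a H ≠ 0 ∧ 0 < t H) with hDpos
  have hH₀D : H₀ ∈ Dpos := Finset.mem_filter.mpr ⟨hH₀, ha₀, ht₀⟩
  have hDne : Dpos.Nonempty := ⟨H₀, hH₀D⟩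
  obtain ⟨H₁, hH₁D, hH₁T⟩ := Finset.exists_mem_eq_inf' hDne t
  set T : ℝ := Dpos.inf' hDne t with hTdef
  have hH₁A : H₁ ∈ A := (Finset.mem_filter.mp hH₁D).1
  have ha₁ : a H₁ ≠ 0 := (Finset.mem_filter.mp hH₁D).2.1
  have hTpos : 0 < T := hH₁T ▸ (Finset.mem_filter.mp hH₁D).2.2
  have hTle : ∀ H ∈ Dpos, T ≤ t H := fun H hH => Finset.inf'_le _ hH
  set P : E n := Q + T • v with hP
  have hfP : ∀ H, f H P = f H Q + T * a H := fun H => hkey H T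
  have hfq' : ∀ H, a H ≠ 0 → f H Q = -(a H * t H) := fun H hHa => by
    linarith [hat H hHa]
  have hP₁ : f H₁ P = 0 := by
    rw [hfP, hfq' H₁ ha₁, hH₁T]; ring
  have claim1 : ∀ H ∈ A, f H P ≠ 0 → 0 < f H P * f H Q := by
    intro H hH hfPne
    by_cases haH : a H = 0
    · rw [hfP, haH, mul_zero, add_zero]
      exact mul_self_pos.mpr (hfQ H hH)
    · have ha2 : 0 < a H ^ 2 := by
        rcases lt_or_gt_of_ne haH with h | h <;> nlinarith
      have hfp : f H P = a H * (T - t H) := by rw [hfP, hfq' H haH]; ring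
      have htne : t H ≠ T := by
        intro h; rw [hfp, h] at hfPne; simp at hfPne
      have htne0 : t H ≠ 0 := by
        intro h; apply hfQ H hH; rw [hfq' H haH, h, mul_zero, neg_zero]
      have hprod : f H P * f H Q = a H ^ 2 * (t H * (t H - T)) := by
        rw [hfp, hfq' H haH]; ring
      rw [hprod]
      rcases lt_trichotomy (t H) 0 with h1 | h1 | h1
      · exact mul_pos ha2 (mul_pos_of_neg_of_neg h1 (by linarith))
      · exact absurd h1 htne0
      · have hTt : T < t H :=
          lt_of_le_of_ne (hTle H (Finset.mem_filter.mpr ⟨hH, haH, h1⟩)) (Ne.symm htne)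
        exact mul_pos ha2 (mul_pos h1 (by linarith))
  have claim2 : ∀ H ∈ A, f H P = 0 → ∃ μ : ℝ, μ ≠ 0 ∧ ∀ x, f H x = μ * f H₁ x := by
    intro H hH hP0
    have haH : a H ≠ 0 := by
      intro h
      apply hfQ H hH
      have := hfP H
      rw [h, mul_zero, add_zero] at this
      rw [← this]; exact hP0
    have hfp : f H P = a H * (T - t H) := by rw [hfP, hfq' H haH]; ring
    have htT : t H = T := by
      rcases mul_eq_zero.mp (hfp ▸ hP0) with h | h
      · exact absurd h haH
      · linarith
    have hmm := hdist H hH H₁ hH₁A haH ha₁ (htT.trans hH₁T)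
    refine ⟨a H / a H₁, div_ne_zero haH ha₁, ?_⟩
    have hnorm : H.normal = (a H / a H₁) • H₁.normal := by
      have h2 : H.normal = a H • ((a H)⁻¹ • H.normal) := by
        rw [smul_smul, mul_inv_cancel₀ haH, one_smul]
      rw [h2, hmm, smul_smul, div_eq_mul_inv]
    have hconst : H.const = (a H / a H₁) * H₁.const := by
      have e1 : ⟪H.normal, P⟫_ℝ = H.const := by
        have := hP0; simpa [hf, sub_eq_zero] using this
      have e2 : ⟪H₁.normal, P⟫_ℝ = H₁.const := by
        simpa [hf, sub_eq_zero] using hP₁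
      rw [← e1, ← e2, hnorm, real_inner_smul_left]
    intro x
    simp only [hf]
    rw [hnorm, hconst, real_inner_smul_left]
    ring
  set s₁ : ℝ := Real.sign (f H₁ Q) with hs₁def
  have hs₁ : s₁ = -1 ∨ s₁ = 1 := Real.sign_apply_eq_of_ne_zero _ (hfQ H₁ hH₁A)
  have hn₁ : (0:ℝ) < ‖H₁.normal‖ := norm_pos_iff.mpr H₁.normal_ne
  set F : Finset (AffHyp n) := A.filter (fun H => f H P ≠ 0) with hFdef
  set r : ℝ := if hFne : F.Nonempty then F.inf' hFne (fun H => |f H P| / ‖H.normal‖)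
    else 1 with hrdef
  have hrpos : 0 < r := by
    rw [hrdef]; split_ifs with hFne
    · rw [Finset.lt_inf'_iff]
      intro H hH
      exact div_pos (abs_pos.mpr ((Finset.mem_filter.mp hH).2))
        (norm_pos_iff.mpr H.normal_ne)
    · norm_num
  have hrle : ∀ H ∈ F, r ≤ |f H P| / ‖H.normal‖ := by
    intro H hH
    rw [hrdef, dif_pos ⟨H, hH⟩]
    exact Finset.inf'_le _ hH
  have habs₁ : |s₁| = 1 := by rcases hs₁ with h | h <;> rw [h] <;> norm_num
  have hKEY : ∀ y : E n, ⟪H₁.normal, y⟫_ℝ = H₁.const → dist y P < r →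
      y ∈ closure (facet A O) := by
    intro y hy hyr
    rw [Metric.mem_closure_iff]
    intro δ hδ
    set ε : ℝ := min δ (r - dist y P) / (2 * ‖H₁.normal‖) with hε
    have hεpos : 0 < ε := div_pos (lt_min hδ (by linarith)) (by positivity)
    set z : E n := y + (ε * s₁) • H₁.normal with hz
    have hdzy : dist y z = ε * ‖H₁.normal‖ := by
      rw [dist_eq_norm, hz]
      simp only [sub_add_cancel_left, norm_neg]
      rw [norm_smul, Real.norm_eq_abs, abs_mul, habs₁, abs_of_pos hεpos, mul_one]
    have hεn : ε * ‖H₁.normal‖ ≤ min δ (r - dist y P) / 2 :=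
      le_of_eq (by rw [hε]; exact half_helper hn₁.ne')
    have hdzP : dist z P < r := by
      have h1 : dist z P ≤ dist z y + dist y P := dist_triangle _ _ _
      have h2 : dist z y = ε * ‖H₁.normal‖ := by rw [dist_comm]; exact hdzy
      have h3 : min δ (r - dist y P) ≤ r - dist y P := min_le_right _ _
      have h4 : 0 < r - dist y P := by linarith
      nlinarith [hεn]
    have hz1 : f H₁ z = ε * s₁ * ‖H₁.normal‖ ^ 2 := by
      simp only [hf, hz, inner_add_right, real_inner_smul_right,
        real_inner_self_eq_norm_sq, hy]
      ring
    have hsz1 : Real.sign (f H₁ z) = s₁ := by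
      rcases hs₁ with h | h
      · rw [hz1, h]
        rw [Real.sign_of_neg (by nlinarith [mul_pos hεpos (mul_pos hn₁ hn₁)])]
      · rw [hz1, h]
        rw [Real.sign_of_pos (by nlinarith [mul_pos hεpos (mul_pos hn₁ hn₁)])]
    refine ⟨z, ?_, ?_⟩
    · intro H hH
      show Real.sign (f H z) = Real.sign (f H O)
      by_cases hfPz : f H P = 0
      · obtain ⟨μ, hμne, hμ⟩ := claim2 H hH hfPz
        calc Real.sign (f H z) = Real.sign μ * s₁ := by
              rw [hμ z, WallsAux.sign_mul, hsz1]
          _ = Real.sign (f H Q) := by rw [hμ Q, WallsAux.sign_mul, hs₁def]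
          _ = Real.sign (f H O) := hsQ H hH
      · have hHF : H ∈ F := Finset.mem_filter.mpr ⟨hH, hfPz⟩
        have hdiff : |f H z - f H P| < |f H P| := by
          have h1 : f H z - f H P = ⟪H.normal, z - P⟫_ℝ := by
            simp only [hf, inner_sub_right]; ring
          rw [h1]
          calc |⟪H.normal, z - P⟫_ℝ| ≤ ‖H.normal‖ * ‖z - P‖ :=
                abs_real_inner_le_norm _ _
            _ < ‖H.normal‖ * r := by
                apply mul_lt_mul_of_pos_left _ (norm_pos_iff.mpr H.normal_ne)
                rw [← dist_eq_norm]; exact hdzP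
            _ ≤ |f H P| := by
                have h5 := hrle H hHF
                rw [le_div_iff₀ (norm_pos_iff.mpr H.normal_ne)] at h5
                linarith
        calc Real.sign (f H z) = Real.sign (f H P) :=
              WallsAux.sign_eq_of_mul_pos (WallsAux.same_side hdiff)
          _ = Real.sign (f H Q) := WallsAux.sign_eq_of_mul_pos (claim1 H hH hfPz)
          _ = Real.sign (f H O) := hsQ H hH
    · have h3 : min δ (r - dist y P) ≤ δ := min_le_left _ _
      rw [hdzy]
      linarith [hεn]
  have hPcar : ⟪H₁.normal, P⟫_ℝ = H₁.const := by simpa [hf, sub_eq_zero] using hP₁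
  refine ⟨H₁, hH₁A, ha₁, hH₁A, ?_⟩
  set s : Set (E n) := closure (facet A O) ∩ H₁.carrier with hsdef
  have hPs : P ∈ s := ⟨hKEY P hPcar (by simpa using hrpos), hPcar⟩
  have hdir : vectorSpan ℝ s = LinearMap.ker (innerₛₗ ℝ H₁.normal) := by
    apply le_antisymm
    · rw [vectorSpan_def]
      apply Submodule.span_le.mpr
      rintro w ⟨y, hy, x, hx, rfl⟩
      simp only [SetLike.mem_coe, LinearMap.mem_ker, innerₛₗ_apply_apply, vsub_eq_sub,
        inner_sub_right]
      have hy2 : ⟪H₁.normal, y⟫_ℝ = H₁.const := hy.2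
      have hx2 : ⟪H₁.normal, x⟫_ℝ = H₁.const := hx.2
      rw [hy2, hx2, sub_self]
    · intro w hw
      simp only [LinearMap.mem_ker, innerₛₗ_apply_apply] at hw
      by_cases hw0 : w = 0
      · simp [hw0]
      · have hwn : 0 < ‖w‖ := norm_pos_iff.mpr hw0
        set u : E n := (r / (2 * ‖w‖)) • w with hu
        have hucar : ⟪H₁.normal, P + u⟫_ℝ = H₁.const := by
          rw [inner_add_right, hu, real_inner_smul_right, hw, mul_zero, add_zero, hPcar]
        have huP : P + u ∈ s := by
          refine ⟨hKEY (P + u) hucar ?_, hucar⟩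
          rw [dist_eq_norm]
          simp only [add_sub_cancel_left]
          rw [hu, norm_smul, Real.norm_eq_abs, abs_of_pos (by positivity)]
          rw [half_helper hwn.ne']
          linarith
        have humem : u ∈ vectorSpan ℝ s := by
          have h6 := vsub_mem_vectorSpan ℝ huP hPs
          simpa using h6
        have hw' : w = ((2 * ‖w‖) / r) • u := by
          rw [hu, smul_smul]
          rw [show (2 * ‖w‖) / r * (r / (2 * ‖w‖)) = 1 by field_simp, one_smul]
        rw [hw']
        exact Submodule.smul_mem _ _ humem
  show sdim s = n - 1
  rw [sdim, direction_affineSpan, hdir]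
  have hsurj : LinearMap.range (innerₛₗ ℝ H₁.normal) = ⊤ := by
    rw [LinearMap.range_eq_top]
    intro c
    refine ⟨(c / ‖H₁.normal‖ ^ 2) • H₁.normal, ?_⟩
    rw [innerₛₗ_apply_apply, real_inner_smul_right, real_inner_self_eq_norm_sq]
    field_simp
  have hrank := (innerₛₗ ℝ H₁.normal).finrank_range_add_finrank_ker
  rw [hsurj, finrank_top, finrank_self, finrank_euclideanSpace_fin] at hrank
  omega

end WallsAux

/-- If a polar coordinate system `(O; b)` is generic with respect to an essential
affine arrangement `A`, then the central arrangement of the directions of the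
walls of the chamber of `A` containing `O` is essential: the intersection of those
directions is `{0}`. -/
theorem walls_of_generic_chamber_essential (n : ℕ) (A : Finset (AffHyp n))
    (hA : EssentialAffine A) (O : E n) (b : OrthonormalBasis (Fin n) ℝ (E n))
    (hgen : IsGenericPolar A O b) :
    {v : E n | ∀ H : AffHyp n, IsWall A (facet A O) H → ⟪H.normal, v⟫_ℝ = 0}
      = {0} := by
  classical
  have hO := hgen.1
  apply Set.eq_singleton_iff_unique_mem.mpr
  constructor
  · intro H _
    simp
  · intro v hv
    by_contra hvne
    have hall : ∀ H ∈ A, ⟪H.normal, v⟫_ℝ = 0 := by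
      by_contra hex
      push_neg at hex
      obtain ⟨H₀, hH₀, ha₀⟩ := hex
      have hfacet_eq : facet A O = ⋂ H ∈ A, {y : E n |
          Real.sign (⟪H.normal, y⟫_ℝ - H.const)
            = Real.sign (⟪H.normal, O⟫_ℝ - H.const)} := by
        ext y
        simp [facet, Set.mem_iInter]
      have hopen : IsOpen (facet A O) := by
        rw [hfacet_eq]
        refine isOpen_biInter_finset fun H hH => ?_
        have hcont : Continuous fun y : E n => ⟪H.normal, y⟫_ℝ - H.const :=
          (continuous_const.inner continuous_id).sub continuous_const
        have hne : ⟪H.normal, O⟫_ℝ - H.const ≠ 0 := sub_ne_zero.mpr (hO H hH)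
        rcases hne.lt_or_gt with h | h
        · have heq : {y : E n | Real.sign (⟪H.normal, y⟫_ℝ - H.const)
              = Real.sign (⟪H.normal, O⟫_ℝ - H.const)}
              = {y : E n | ⟪H.normal, y⟫_ℝ - H.const < 0} := by
            ext y
            rw [Set.mem_setOf_eq, Set.mem_setOf_eq, Real.sign_of_neg h]
            exact WallsAux.sign_eq_neg_one_iff
          rw [heq]
          exact isOpen_lt hcont continuous_const
        · have heq : {y : E n | Real.sign (⟪H.normal, y⟫_ℝ - H.const)
              = Real.sign (⟪H.normal, O⟫_ℝ - H.const)}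
              = {y : E n | 0 < ⟪H.normal, y⟫_ℝ - H.const} := by
            ext y
            rw [Set.mem_setOf_eq, Set.mem_setOf_eq, Real.sign_of_pos h]
            exact WallsAux.sign_eq_one_iff
          rw [heq]
          exact isOpen_lt continuous_const hcont
      have hOfacet : O ∈ facet A O := fun H hH => rfl
      set m : AffHyp n → E n := fun H => (⟪H.normal, v⟫_ℝ)⁻¹ • H.normal with hm
      set dd : AffHyp n → ℝ := fun H => H.const / ⟪H.normal, v⟫_ℝ with hdd
      set F : Finset (E n × ℝ) := ((A ×ˢ A).filter (fun q =>
          ⟪q.1.normal, v⟫_ℝ ≠ 0 ∧ ⟪q.2.normal, v⟫_ℝ ≠ 0 ∧ m q.1 ≠ m q.2)).image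
        (fun q => (m q.1 - m q.2, dd q.1 - dd q.2)) with hF
      have hFne : ∀ p ∈ F, p.1 ≠ 0 := by
        intro p hp
        obtain ⟨q, hq, rfl⟩ := Finset.mem_image.mp hp
        exact sub_ne_zero.mpr (Finset.mem_filter.mp hq).2.2.2
      obtain ⟨Q, hQ, hQav⟩ :=
        WallsAux.exists_generic (facet A O) hopen ⟨O, hOfacet⟩ F hFne
      have e1 : ∀ G : AffHyp n, ⟪G.normal, v⟫_ℝ ≠ 0 →
          (G.const - ⟪G.normal, Q⟫_ℝ) / ⟪G.normal, v⟫_ℝ = dd G - ⟪m G, Q⟫_ℝ := by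
        intro G haG
        rw [hdd, hm]
        simp only [real_inner_smul_left]
        rw [sub_div, div_eq_inv_mul, div_eq_inv_mul]
      have hdist : ∀ H ∈ A, ∀ H' ∈ A, ⟪H.normal, v⟫_ℝ ≠ 0 → ⟪H'.normal, v⟫_ℝ ≠ 0 →
          (H.const - ⟪H.normal, Q⟫_ℝ) / ⟪H.normal, v⟫_ℝ
            = (H'.const - ⟪H'.normal, Q⟫_ℝ) / ⟪H'.normal, v⟫_ℝ →
          m H = m H' := by
        intro H hH H' hH' haH haH' hteq
        by_contra hmne
        have hqF : (m H - m H', dd H - dd H') ∈ F := Finset.mem_image.mpr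
          ⟨(H, H'), Finset.mem_filter.mpr
            ⟨Finset.mem_product.mpr ⟨hH, hH'⟩, haH, haH', hmne⟩, rfl⟩
        apply hQav _ hqF
        rw [inner_sub_left]
        rw [e1 H haH, e1 H' haH'] at hteq
        show ⟪m H, Q⟫_ℝ - ⟪m H', Q⟫_ℝ = dd H - dd H'
        linarith
      have hfQ0 : ⟪H₀.normal, Q⟫_ℝ - H₀.const ≠ 0 := by
        intro h
        apply sub_ne_zero.mpr (hO H₀ hH₀)
        have h2 := hQ H₀ hH₀
        rw [h, Real.sign_zero] at h2
        exact Real.sign_eq_zero_iff.mp h2.symm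
      have ht0ne : (H₀.const - ⟪H₀.normal, Q⟫_ℝ) / ⟪H₀.normal, v⟫_ℝ ≠ 0 :=
        div_ne_zero (fun h => hfQ0 (by linarith)) ha₀
      rcases ht0ne.lt_or_gt with hneg | hpos
      · have hdist' : ∀ H ∈ A, ∀ H' ∈ A, ⟪H.normal, -v⟫_ℝ ≠ 0 → ⟪H'.normal, -v⟫_ℝ ≠ 0 →
            (H.const - ⟪H.normal, Q⟫_ℝ) / ⟪H.normal, -v⟫_ℝ
              = (H'.const - ⟪H'.normal, Q⟫_ℝ) / ⟪H'.normal, -v⟫_ℝ →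
            (⟪H.normal, -v⟫_ℝ)⁻¹ • H.normal = (⟪H'.normal, -v⟫_ℝ)⁻¹ • H'.normal := by
          intro H hH H' hH' haH haH' hteq
          simp only [inner_neg_right, neg_ne_zero] at haH haH'
          simp only [inner_neg_right, div_neg, neg_inj] at hteq
          have hmeq := hdist H hH H' hH' haH haH' hteq
          simp only [inner_neg_right, inv_neg, neg_smul, neg_inj]
          exact hmeq
        obtain ⟨H₁, hH₁A, ha₁, hwall⟩ := WallsAux.crossing A O Q (-v) hO hQ hdist'
          H₀ hH₀ (by rw [inner_neg_right]; simpa using ha₀)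
          (by rw [inner_neg_right, div_neg]; linarith)
        apply ha₁
        rw [inner_neg_right, hv H₁ hwall, neg_zero]
      · obtain ⟨H₁, hH₁A, ha₁, hwall⟩ := WallsAux.crossing A O Q v hO hQ
          (fun H hH H' hH' h1 h2 h3 => hdist H hH H' hH' h1 h2 h3) H₀ hH₀ ha₀ hpos
        exact ha₁ (hv H₁ hwall)
    obtain ⟨S, hSA, ⟨p, hp⟩, hdim⟩ := hA
    have hpv : p + v ∈ interFam S := by
      intro H hH
      have h1 : ⟪H.normal, p⟫_ℝ = H.const := hp H hH
      show ⟪H.normal, p + v⟫_ℝ = H.const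
      rw [inner_add_right, hall H (hSA hH), add_zero, h1]
    have hvmem : v ∈ vectorSpan ℝ (interFam S) := by
      have h2 := vsub_mem_vectorSpan ℝ hpv hp
      simpa using h2
    have hbot : vectorSpan ℝ (interFam S) = ⊥ := by
      apply Submodule.finrank_eq_zero.mp
      unfold sdim at hdim
      rw [direction_affineSpan] at hdim
      exact hdim
    rw [hbot, Submodule.mem_bot] at hvmem
    exact hvne hvmem
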